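/- Let κ be a cardinal with cf(κ) > ω and let 𝒜 be an almost disjoint family on ω of size κ. If there are subfamilies 𝒜₀, 𝒜₁ ⊆ 𝒜, each of size κ, such that the sets {|x ∩ y| : x, y ∈ 𝒜₀, x ≠ y} and {|x ∩ y| : x, y ∈ 𝒜₁, x ≠ y} are almost oscillating, then Ψ(𝒜) is not homeomorphic to Ψ(𝒜₀). -/

import Mathlib

open Set Cardinal

/-- An almost disjoint family on ω. -/
def ADFamily (𝒜 : Set (Set ℕ)) : Prop :=
  𝒜.Infinite ∧ (∀ A ∈ 𝒜, A.Infinite) ∧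
    ∀ A ∈ 𝒜, ∀ B ∈ 𝒜, A ≠ B → (A ∩ B).Finite

/-- The Ψ-space topology on ℕ ⊕ 𝒜. -/
def psiTop (𝒜 : Set (Set ℕ)) : TopologicalSpace (ℕ ⊕ ↥𝒜) :=
  TopologicalSpace.generateFrom
    ({U | ∃ n : ℕ, U = {Sum.inl n}} ∪
     {U | ∃ (A : ↥𝒜) (F : Finset ℕ),
        U = insert (Sum.inr A) (Sum.inl '' ((A : Set ℕ) \ ↑F))})

/-- Two sets A, B ⊆ ω are oscillating if no difference of two distinct elements
of A equals a difference of two distinct elements of B. -/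
def Oscillating (A B : Set ℕ) : Prop :=
  ∀ x ∈ A, ∀ y ∈ A, ∀ w ∈ B, ∀ z ∈ B, x ≠ y → w ≠ z →
    ((y : ℤ) - (x : ℤ)).natAbs ≠ ((z : ℤ) - (w : ℤ)).natAbs

/-- A, B ⊆ ω are almost oscillating if A \ n and B \ n are oscillating for some n. -/
def AlmostOscillating (A B : Set ℕ) : Prop :=
  ∃ n : ℕ, Oscillating {a ∈ A | n ≤ a} {b ∈ B | n ≤ b}

/-- The set {|x ∩ y| : x, y ∈ 𝒜, x ≠ y} of intersection sizes of an AD family. -/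
def interSizes (𝒜 : Set (Set ℕ)) : Set ℕ :=
  {m | ∃ x ∈ 𝒜, ∃ y ∈ 𝒜, x ≠ y ∧ m = Nat.card ↥(x ∩ y)}

/- ### Auxiliary lemmas -/

/-- Every open set containing a point `A` of the family contains a basic
neighborhood `{A} ∪ (A \ F)`. -/
lemma psi_nbhd {𝒜 : Set (Set ℕ)} {U : Set (ℕ ⊕ ↥𝒜)}
    (hU : @IsOpen _ (psiTop 𝒜) U) (A : ↥𝒜) :
    Sum.inr A ∈ U →
    ∃ F : Finset ℕ, insert (Sum.inr A) (Sum.inl '' ((A : Set ℕ) \ ↑F)) ⊆ U := by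
  have hU' : TopologicalSpace.GenerateOpen
      ({U | ∃ n : ℕ, U = {Sum.inl n}} ∪
       {U | ∃ (A : ↥𝒜) (F : Finset ℕ),
          U = insert (Sum.inr A) (Sum.inl '' ((A : Set ℕ) \ ↑F))}) U := hU
  clear hU
  induction hU' with
  | basic V hV =>
    intro hA
    rcases hV with ⟨n, rfl⟩ | ⟨A', F, rfl⟩
    · simp at hA
    · have : A' = A := by
        rcases hA with h | h
        · exact Sum.inr.inj h.symm
        · simp at h
      subst this
      exact ⟨F, subset_rfl⟩
  | univ => intro _; exact ⟨∅, fun _ _ => trivial⟩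
  | inter V W hV hW ihV ihW =>
    intro hA
    obtain ⟨F₁, hF₁⟩ := ihV hA.1
    obtain ⟨F₂, hF₂⟩ := ihW hA.2
    refine ⟨F₁ ∪ F₂, fun z hz => ⟨hF₁ ?_, hF₂ ?_⟩⟩
    · rcases hz with rfl | ⟨a, ⟨ha, haF⟩, rfl⟩
      · exact mem_insert _ _
      · exact Or.inr ⟨a, ⟨ha, fun hc => haF (by simp [hc])⟩, rfl⟩
    · rcases hz with rfl | ⟨a, ⟨ha, haF⟩, rfl⟩
      · exact mem_insert _ _
      · exact Or.inr ⟨a, ⟨ha, fun hc => haF (by simp [hc])⟩, rfl⟩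
  | sUnion S hS ih =>
    intro hA
    obtain ⟨V, hVS, hAV⟩ := hA
    obtain ⟨F, hF⟩ := ih V hVS hAV
    exact ⟨F, hF.trans (subset_sUnion_of_mem hVS)⟩

/-- Points of the family are not isolated. -/
lemma not_open_inr {𝒜 : Set (Set ℕ)} (hinf : ∀ A ∈ 𝒜, Set.Infinite A) (A : ↥𝒜) :
    ¬ @IsOpen _ (psiTop 𝒜) {Sum.inr A} := by
  intro hop
  obtain ⟨F, hF⟩ := psi_nbhd hop A rfl
  obtain ⟨a, ha⟩ := ((hinf A A.2).diff F.finite_toSet).nonempty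
  have := hF (Or.inr ⟨a, ha, rfl⟩)
  simp at this

lemma open_singleton_inl (𝒜 : Set (Set ℕ)) (n : ℕ) :
    @IsOpen _ (psiTop 𝒜) {Sum.inl n} :=
  TopologicalSpace.GenerateOpen.basic _ (Or.inl ⟨n, rfl⟩)

lemma open_basic (𝒜 : Set (Set ℕ)) (A : ↥𝒜) (F : Finset ℕ) :
    @IsOpen _ (psiTop 𝒜) (insert (Sum.inr A) (Sum.inl '' ((A : Set ℕ) \ ↑F))) :=
  TopologicalSpace.GenerateOpen.basic _ (Or.inr ⟨A, F, rfl⟩)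

section homeo
variable {𝒜 ℬ : Set (Set ℕ)}
  (h : @Homeomorph (ℕ ⊕ ↥𝒜) (ℕ ⊕ ↥ℬ) (psiTop 𝒜) (psiTop ℬ))

/-- A homeomorphism of Ψ-spaces sends isolated points to isolated points. -/
lemma exists_e (hinfB : ∀ B ∈ ℬ, Set.Infinite B) (n : ℕ) :
    ∃ m, h (Sum.inl n) = Sum.inl m := by
  letI := psiTop 𝒜; letI := psiTop ℬ
  rcases hh : h (Sum.inl n) with m | B
  · exact ⟨m, rfl⟩
  · exfalso
    have hop : IsOpen (⇑h '' {Sum.inl n}) :=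
      h.isOpen_image.mpr (open_singleton_inl 𝒜 n)
    rw [Set.image_singleton, hh] at hop
    exact not_open_inr hinfB B hop

/-- A homeomorphism of Ψ-spaces sends non-isolated points to non-isolated points. -/
lemma exists_sigma (hinfA : ∀ A ∈ 𝒜, Set.Infinite A) (A : ↥𝒜) :
    ∃ B, h (Sum.inr A) = Sum.inr B := by
  letI := psiTop 𝒜; letI := psiTop ℬ
  rcases hh : h (Sum.inr A) with m | B
  · exfalso
    have hop : IsOpen (⇑h.symm '' {Sum.inl m}) :=
      h.symm.isOpen_image.mpr (open_singleton_inl ℬ m)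
    rw [Set.image_singleton] at hop
    have : h.symm (Sum.inl m) = Sum.inr A := by
      rw [← hh, Homeomorph.symm_apply_apply]
    rw [this] at hop
    exact not_open_inr hinfA A hop
  · exact ⟨B, rfl⟩

/-- Continuity: the image of `A` under the induced map on ℕ is almost contained
in the corresponding member of the target family. -/
lemma image_almost_subset {e : ℕ → ℕ} (he : ∀ n, h (Sum.inl n) = Sum.inl (e n))
    {σ : ↥𝒜 → ↥ℬ} (hσ : ∀ A, h (Sum.inr A) = Sum.inr (σ A)) (A : ↥𝒜) :
    ∃ F : Finset ℕ, ∀ a ∈ (A : Set ℕ), a ∉ F → e a ∈ (σ A : Set ℕ) := by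
  letI := psiTop 𝒜; letI := psiTop ℬ
  set V : Set (ℕ ⊕ ↥ℬ) :=
    insert (Sum.inr (σ A)) (Sum.inl '' ((σ A : Set ℕ) \ ↑(∅ : Finset ℕ))) with hVdef
  have hV : IsOpen V := open_basic ℬ (σ A) ∅
  have hpre : IsOpen (⇑h ⁻¹' V) := h.isOpen_preimage.mpr hV
  have hmem : Sum.inr A ∈ ⇑h ⁻¹' V := by
    simp only [Set.mem_preimage, hσ, hVdef]
    exact mem_insert _ _
  obtain ⟨F, hF⟩ := psi_nbhd hpre A hmem
  refine ⟨F, fun a ha haF => ?_⟩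
  have h1 : Sum.inl a ∈ ⇑h ⁻¹' V := hF (Or.inr ⟨a, ⟨ha, haF⟩, rfl⟩)
  rw [Set.mem_preimage, he a, hVdef] at h1
  rcases h1 with h1 | ⟨b, hb, hb2⟩
  · simp at h1
  · rw [Sum.inl.inj hb2] at hb; exact hb.1

end homeo

/-- Pigeonhole: an uncountable set mapped into a countable type has an
uncountable fiber. -/
lemma pigeonhole {α β : Type*} [Countable β] {s : Set α} (hs : ¬ s.Countable)
    (f : α → β) : ∃ b, ¬ {x ∈ s | f x = b}.Countable := by
  by_contra hc
  push_neg at hc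
  apply hs
  have hsub : s ⊆ ⋃ b, {x ∈ s | f x = b} := fun x hx => mem_iUnion.mpr ⟨f x, hx, rfl⟩
  exact (Set.countable_iUnion hc).mono hsub

/-- An uncountable AD family has arbitrarily large pairwise intersections. -/
lemma exists_large_inter {𝒜' : Set (Set ℕ)} (hunc : ¬ 𝒜'.Countable)
    (hinf : ∀ A ∈ 𝒜', A.Infinite)
    (had : ∀ A ∈ 𝒜', ∀ B ∈ 𝒜', A ≠ B → (A ∩ B).Finite) (k : ℕ) :
    ∃ x ∈ 𝒜', ∃ y ∈ 𝒜', x ≠ y ∧ k < (x ∩ y).ncard := by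
  have hch : ∀ A : ↥𝒜', ∃ t : Finset ℕ, ↑t ⊆ (A : Set ℕ) ∧ t.card = k + 1 :=
    fun A => (hinf A A.2).exists_subset_card_eq (k + 1)
  choose g hg1 hg2 using hch
  have hni : ¬ Function.Injective g := by
    intro hg
    exact hunc (Set.countable_coe_iff.mp hg.countable)
  obtain ⟨A, B, hgAB, hAB⟩ := Function.not_injective_iff.mp hni
  have hABs : (A : Set ℕ) ≠ (B : Set ℕ) := fun hc => hAB (Subtype.ext hc)
  have hfin : ((A : Set ℕ) ∩ B).Finite := had A A.2 B B.2 hABs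
  refine ⟨A, A.2, B, B.2, hABs, ?_⟩
  have hsub : (↑(g A) : Set ℕ) ⊆ (A : Set ℕ) ∩ B := by
    intro a ha
    exact ⟨hg1 A ha, hg1 B (by rw [← hgAB]; exact ha)⟩
  have := Set.ncard_le_ncard hsub hfin
  rw [Set.ncard_coe_finset, hg2 A] at this
  omega

/-- The exact relation between the sizes of `sx ∩ sy` and `x ∩ y` when both
error sets are the same pair `E`, `D`. -/
lemma card_calc {e : ℕ → ℕ} (he : Function.Injective e) {x y sx sy E D : Set ℕ}
    (hxy : (x ∩ y).Finite) (hD : D.Finite)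
    (hEx : e '' x \ sx = E) (hEy : e '' y \ sy = E)
    (hDx : sx \ e '' x = D) (hDy : sy \ e '' y = D) :
    (sx ∩ sy).ncard + E.ncard = (x ∩ y).ncard + D.ncard ∧ E.ncard ≤ (x ∩ y).ncard := by
  have him : e '' x ∩ e '' y = e '' (x ∩ y) := (Set.image_inter he).symm
  have hfinq : (e '' (x ∩ y)).Finite := hxy.image e
  have hEsub : E ⊆ e '' (x ∩ y) := by
    rw [← him]
    intro a ha
    constructor
    · rw [← hEx] at ha; exact ha.1
    · rw [← hEy] at ha; exact ha.1
  have hseq : sx ∩ sy = (e '' (x ∩ y) \ E) ∪ D := by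
    rw [← him]
    ext a
    have p1 := Set.ext_iff.mp hEx a
    have p2 := Set.ext_iff.mp hEy a
    have p3 := Set.ext_iff.mp hDx a
    have p4 := Set.ext_iff.mp hDy a
    simp only [Set.mem_diff, Set.mem_inter_iff, Set.mem_union] at *
    tauto
  have hdisj : Disjoint (e '' (x ∩ y) \ E) D := by
    rw [Set.disjoint_left]
    intro a ha haD
    rw [← hDx] at haD
    apply haD.2
    have : a ∈ e '' x ∩ e '' y := by rw [him]; exact ha.1
    exact this.1
  have hEfin : E.Finite := hfinq.subset hEsub
  have hcard : (sx ∩ sy).ncard = ((e '' (x ∩ y)).ncard - E.ncard) + D.ncard := by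
    rw [hseq, Set.ncard_union_eq hdisj hfinq.diff hD, Set.ncard_diff hEsub hEfin]
  have hle : E.ncard ≤ (e '' (x ∩ y)).ncard := Set.ncard_le_ncard hEsub hfinq
  rw [Set.ncard_image_of_injective _ he] at hcard hle
  exact ⟨by omega, hle⟩

/-- Corollary 15: if 𝒜 is an AD family of size κ with cf(κ) > ω admitting two
subfamilies 𝒜₀, 𝒜₁ of size κ whose sets of intersection sizes are almost
oscillating, then Ψ(𝒜) is not homeomorphic to Ψ(𝒜₀). -/
theorem psi_not_homeomorphic_of_subfamilies (κ : Cardinal)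
    (hcf : Cardinal.aleph0 < κ.ord.cof)
    (𝒜 : Set (Set ℕ)) (h𝒜 : ADFamily 𝒜) (hc𝒜 : Cardinal.mk ↥𝒜 = κ)
    (𝒜₀ 𝒜₁ : Set (Set ℕ)) (h₀ : 𝒜₀ ⊆ 𝒜) (h₁ : 𝒜₁ ⊆ 𝒜)
    (hc₀ : Cardinal.mk ↥𝒜₀ = κ) (hc₁ : Cardinal.mk ↥𝒜₁ = κ)
    (hosc : AlmostOscillating (interSizes 𝒜₀) (interSizes 𝒜₁)) :
    ¬ Nonempty (@Homeomorph (ℕ ⊕ ↥𝒜) (ℕ ⊕ ↥𝒜₀) (psiTop 𝒜) (psiTop 𝒜₀)) := by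
  classical
  letI := psiTop 𝒜
  letI := psiTop 𝒜₀
  rintro ⟨h⟩
  obtain ⟨-, hinf𝒜, had𝒜⟩ := h𝒜
  have hinf₀ : ∀ B ∈ 𝒜₀, Set.Infinite B := fun B hB => hinf𝒜 B (h₀ hB)
  -- extract the induced maps on isolated and non-isolated points
  choose e he using exists_e h hinf₀
  choose σ hσ using exists_sigma h hinf𝒜
  choose e' he' using exists_e h.symm hinf𝒜
  choose τ hτ using exists_sigma h.symm hinf₀
  have hee' : ∀ m, e (e' m) = m := by
    intro m
    have h1 : h (Sum.inl (e' m)) = Sum.inl m := by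
      rw [← he' m, Homeomorph.apply_symm_apply]
    have h2 := he (e' m)
    rw [h1] at h2; exact (Sum.inl.inj h2).symm
  have heinj : Function.Injective e := by
    intro a b hab
    have : h (Sum.inl a) = h (Sum.inl b) := by rw [he a, he b, hab]
    exact Sum.inl.inj (h.injective this)
  have hτσ : ∀ A, τ (σ A) = A := by
    intro A
    have h1 : h.symm (Sum.inr (σ A)) = Sum.inr A := by
      rw [← hσ, Homeomorph.symm_apply_apply]
    have h2 := hτ (σ A); rw [h1] at h2; exact (Sum.inr.inj h2).symm
  have hσinj : Function.Injective σ := by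
    intro A B hab
    have : h (Sum.inr A) = h (Sum.inr B) := by rw [hσ, hσ, hab]
    exact Sum.inr.inj (h.injective this)
  -- the error sets are finite
  have hEfin : ∀ A : ↥𝒜, (e '' (A : Set ℕ) \ (σ A : Set ℕ)).Finite := by
    intro A
    obtain ⟨F, hF⟩ := image_almost_subset h he hσ A
    apply (F.finite_toSet.image e).subset
    rintro p ⟨⟨a, ha, rfl⟩, hp⟩
    refine ⟨a, ?_, rfl⟩
    by_contra hc
    exact hp (hF a ha hc)
  have hDfin : ∀ A : ↥𝒜, ((σ A : Set ℕ) \ e '' (A : Set ℕ)).Finite := by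
    intro A
    obtain ⟨F, hF⟩ := image_almost_subset h.symm he' hτ (σ A)
    apply F.finite_toSet.subset
    rintro b ⟨hb1, hb2⟩
    by_contra hc
    have h1 : e' b ∈ ((τ (σ A)) : Set ℕ) := hF b hb1 hc
    rw [hτσ A] at h1
    exact hb2 ⟨e' b, h1, hee' b⟩
  -- 𝒜₁ is uncountable
  have hκ : Cardinal.aleph0 < κ := lt_of_lt_of_le hcf (Ordinal.cof_ord_le κ)
  have hunc₁ : ¬ 𝒜₁.Countable := by
    intro hc
    have : Cardinal.mk ↥𝒜₁ ≤ Cardinal.aleph0 :=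
      Cardinal.mk_le_aleph0_iff.mpr (Set.countable_coe_iff.mpr hc)
    rw [hc₁] at this
    exact absurd this (not_le.mpr hκ)
  -- pigeonhole to fix the error sets
  set f : Set ℕ → Finset ℕ × Finset ℕ := fun x =>
    if hx : x ∈ 𝒜 then ((hEfin ⟨x, hx⟩).toFinset, (hDfin ⟨x, hx⟩).toFinset)
    else (∅, ∅) with hfdef
  obtain ⟨P, hP⟩ := pigeonhole hunc₁ f
  set 𝒜₂ : Set (Set ℕ) := {x ∈ 𝒜₁ | f x = P} with h𝒜₂
  have h𝒜₂sub : 𝒜₂ ⊆ 𝒜₁ := fun x hx => hx.1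
  have hEDx : ∀ x, x ∈ 𝒜₂ → ∀ hx𝒜 : x ∈ 𝒜,
      e '' x \ (σ ⟨x, hx𝒜⟩ : Set ℕ) = ↑P.1 ∧
      (σ ⟨x, hx𝒜⟩ : Set ℕ) \ e '' x = ↑P.2 := by
    intro x hx hx𝒜
    have hfx : f x = P := hx.2
    rw [hfdef] at hfx
    simp only [dif_pos hx𝒜] at hfx
    have h1 : (hEfin ⟨x, hx𝒜⟩).toFinset = P.1 := by rw [← hfx]
    have h2 : (hDfin ⟨x, hx𝒜⟩).toFinset = P.2 := by rw [← hfx]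
    constructor
    · rw [← h1, Set.Finite.coe_toFinset]
    · rw [← h2, Set.Finite.coe_toFinset]
  -- 𝒜₂ is an uncountable AD family
  have hinf₂ : ∀ A ∈ 𝒜₂, A.Infinite := fun A hA => hinf𝒜 A (h₁ (h𝒜₂sub hA))
  have had₂ : ∀ A ∈ 𝒜₂, ∀ B ∈ 𝒜₂, A ≠ B → (A ∩ B).Finite :=
    fun A hA B hB => had𝒜 A (h₁ (h𝒜₂sub hA)) B (h₁ (h𝒜₂sub hB))
  -- the key computation for a pair from 𝒜₂
  have key : ∀ x, x ∈ 𝒜₂ → ∀ y, y ∈ 𝒜₂ → x ≠ y →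
      ∃ m₀, m₀ ∈ interSizes 𝒜₀ ∧ m₀ + P.1.card = (x ∩ y).ncard + P.2.card ∧
        P.1.card ≤ (x ∩ y).ncard ∧ (x ∩ y).ncard ∈ interSizes 𝒜₁ := by
    intro x hx y hy hxy
    have hx𝒜 : x ∈ 𝒜 := h₁ (h𝒜₂sub hx)
    have hy𝒜 : y ∈ 𝒜 := h₁ (h𝒜₂sub hy)
    have hxyfin : (x ∩ y).Finite := had𝒜 x hx𝒜 y hy𝒜 hxy
    obtain ⟨hEx, hDx⟩ := hEDx x hx hx𝒜
    obtain ⟨hEy, hDy⟩ := hEDx y hy hy𝒜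
    obtain ⟨hcardeq, hle⟩ := card_calc heinj hxyfin P.2.finite_toSet hEx hEy hDx hDy
    rw [Set.ncard_coe_finset, Set.ncard_coe_finset] at hcardeq
    rw [Set.ncard_coe_finset] at hle
    have hσne : ((σ ⟨x, hx𝒜⟩ : ↥𝒜₀) : Set ℕ) ≠ ((σ ⟨y, hy𝒜⟩ : ↥𝒜₀) : Set ℕ) := by
      intro hc
      exact hxy (congrArg Subtype.val (hσinj (Subtype.ext hc)))
    refine ⟨(((σ ⟨x, hx𝒜⟩ : ↥𝒜₀) : Set ℕ) ∩ ((σ ⟨y, hy𝒜⟩ : ↥𝒜₀) : Set ℕ)).ncard,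
      ⟨_, (σ ⟨x, hx𝒜⟩).2, _, (σ ⟨y, hy𝒜⟩).2, hσne, (Nat.card_coe_set_eq _).symm⟩,
      hcardeq, hle,
      ⟨x, h𝒜₂sub hx, y, h𝒜₂sub hy, hxy, (Nat.card_coe_set_eq _).symm⟩⟩
  -- produce two pairs with large, distinct intersection sizes
  obtain ⟨N, hoscN⟩ := hosc
  obtain ⟨x₁, hx₁, y₁, hy₁, hne₁, hm₁⟩ :=
    exists_large_inter hP hinf₂ had₂ (N + P.1.card)
  obtain ⟨x₂, hx₂, y₂, hy₂, hne₂, hm₂⟩ :=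
    exists_large_inter hP hinf₂ had₂ ((x₁ ∩ y₁).ncard)
  obtain ⟨m₀₁, hm₀₁mem, heq₁, hle₁, hmem₁⟩ := key x₁ hx₁ y₁ hy₁ hne₁
  obtain ⟨m₀₂, hm₀₂mem, heq₂, hle₂, hmem₂⟩ := key x₂ hx₂ y₂ hy₂ hne₂
  refine hoscN m₀₁ ⟨hm₀₁mem, by omega⟩ m₀₂ ⟨hm₀₂mem, by omega⟩
    ((x₁ ∩ y₁).ncard) ⟨hmem₁, by omega⟩ ((x₂ ∩ y₂).ncard) ⟨hmem₂, by omega⟩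
    (by omega) (by omega) (by omega)
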